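/- The set 𝒩₃ of triples (m₁,m₂,m₃) of natural numbers satisfying 2 ≤ m₁ ≤ m₂ ≤ m₃, Θ > 0, 2/Θ a positive integer and m₃ ≤ 2/Θ consists exactly of the 28 triples: (2,3,7), (2,3,8), (2,4,5), (2,3,9), (2,3,10), (2,3,12), (2,4,6), (3,3,4), (2,3,14), (2,3,15), (2,5,5), (2,3,18), (2,4,8), (2,5,6), (3,3,5), (2,4,12), (2,6,6), (3,3,6), (3,4,4), (2,5,10), (2,6,9), (3,3,9), (2,8,8), (3,4,6), (4,4,4), (3,6,6), (4,4,6), (5,5,5). -/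

import Mathlib

/-- The orbifold canonical degree `Θ` of a tuple of natural numbers (given as a list). -/
def thetaL (l : List ℕ) : ℚ := -2 + (l.map fun m => 1 - 1 / (m : ℚ)).sum

/-- Membership in `𝒩_r`: the entries are at least `2` and weakly increasing, `Θ > 0`,
`2/Θ` is a positive integer, and every entry (equivalently, the largest entry `m_r`)
is at most `2/Θ`. -/
def NcondL (l : List ℕ) : Prop :=
  (∀ m ∈ l, 2 ≤ m) ∧ l.Pairwise (· ≤ ·) ∧ 0 < thetaL l ∧
    (∃ n : ℕ, 0 < n ∧ (2 : ℚ) / thetaL l = n) ∧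
    ∀ m ∈ l, (m : ℚ) ≤ 2 / thetaL l

lemma ncond (a b c n : ℕ) (ha : 2 ≤ a) (hab : a ≤ b) (hbc : b ≤ c) (hn : 0 < n)
    (hθ : thetaL [a,b,c] * n = 2) (hcn : c ≤ n) : NcondL [a,b,c] := by
  have hn0 : (0:ℚ) < n := by exact_mod_cast hn
  have hθv : thetaL [a,b,c] = 2 / n := by
    field_simp at hθ ⊢; linarith [hθ]
  have hθpos : 0 < thetaL [a,b,c] := by rw [hθv]; positivity
  have h2θ : (2:ℚ) / thetaL [a,b,c] = n := by
    rw [hθv]; field_simp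
  refine ⟨?_, ?_, hθpos, ⟨n, hn, h2θ⟩, ?_⟩
  · simp; omega
  · simp [List.pairwise_cons]; omega
  · intro m hm
    rw [h2θ]
    have : m ≤ n := by simp at hm; omega
    exact_mod_cast this

set_option maxHeartbeats 1000000 in
lemma fwd (a b c : ℕ)
    (h1 : ∀ m ∈ [a,b,c], 2 ≤ m) (h2 : ([a,b,c]).Pairwise (· ≤ ·))
    (h3 : 0 < thetaL [a,b,c])
    (h4 : ∃ n : ℕ, 0 < n ∧ (2 : ℚ) / thetaL [a,b,c] = n)
    (h5 : ∀ m ∈ [a,b,c], (m : ℚ) ≤ 2 / thetaL [a,b,c]) :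
    a*b + a*c + b*c < a*b*c ∧
    (a*b*c - (a*b + a*c + b*c)) ∣ 2*(a*b*c) ∧
    c*(a*b*c - (a*b + a*c + b*c)) ≤ 2*(a*b*c) ∧
    2 ≤ a ∧ a ≤ b ∧ b ≤ c ∧ a ≤ 5 ∧ b ≤ 8 ∧ c ≤ 3*a*b := by
  obtain ⟨n, hn, hne⟩ := h4
  have ha2 : 2 ≤ a := h1 a (by simp)
  have hab : a ≤ b := by simp [List.pairwise_cons] at h2; omega
  have hbc : b ≤ c := by simp [List.pairwise_cons] at h2; omega
  have hA2 : (2:ℚ) ≤ a := by exact_mod_cast ha2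
  have hAB : (a:ℚ) ≤ b := by exact_mod_cast hab
  have hBC : (b:ℚ) ≤ c := by exact_mod_cast hbc
  have hA : (0:ℚ) < a := by linarith
  have hB : (0:ℚ) < b := by linarith
  have hC : (0:ℚ) < c := by linarith
  set Θ := thetaL [a,b,c] with hΘdef
  have hθP : Θ * ((a:ℚ) * b * c) = (a:ℚ)*b*c - ((a:ℚ)*b + (a:ℚ)*c + (b:ℚ)*c) := by
    rw [hΘdef]; simp [thetaL]; field_simp; ring
  have hSP : (a:ℚ)*b + (a:ℚ)*c + (b:ℚ)*c < (a:ℚ)*b*c := by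
    nlinarith [mul_pos h3 (mul_pos (mul_pos hA hB) hC)]
  have hP : a*b + a*c + b*c < a*b*c := by exact_mod_cast hSP
  have h5' : ∀ m : ℕ, m ∈ [a,b,c] →
      (m:ℚ) * ((a:ℚ)*b*c - ((a:ℚ)*b + (a:ℚ)*c + (b:ℚ)*c)) ≤ 2 * ((a:ℚ)*b*c) := by
    intro m hm
    have h' : (m:ℚ) * Θ ≤ 2 := (le_div_iff₀ h3).mp (h5 m hm)
    have e3 : (m:ℚ) * Θ * ((a:ℚ) * b * c) ≤ 2 * ((a:ℚ) * b * c) :=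
      mul_le_mul_of_nonneg_right h' (by positivity)
    rw [mul_assoc, hθP] at e3
    linarith [e3]
  have hca := h5' a (by simp)
  have hcbq := h5' b (by simp)
  have hccq := h5' c (by simp)
  have hcb : c*(a*b*c - (a*b + a*c + b*c)) ≤ 2*(a*b*c) := by
    have h' : ((c*(a*b*c - (a*b + a*c + b*c)) : ℕ) : ℚ) ≤ ((2*(a*b*c) : ℕ) : ℚ) := by
      push_cast [Nat.cast_sub (le_of_lt hP)]
      linarith [hccq]
    exact_mod_cast h'
  have hdvd : (a*b*c - (a*b + a*c + b*c)) ∣ 2*(a*b*c) := by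
    refine ⟨n, ?_⟩
    have hq : (2:ℚ) * ((a:ℚ)*b*c) = ((a:ℚ)*b*c - ((a:ℚ)*b + (a:ℚ)*c + (b:ℚ)*c)) * n := by
      rw [div_eq_iff (ne_of_gt h3)] at hne
      calc (2:ℚ) * ((a:ℚ)*b*c) = (n:ℚ) * Θ * ((a:ℚ)*b*c) := by rw [← hne]
        _ = _ := by rw [mul_assoc, hθP]; ring
    have h' : ((2*(a*b*c) : ℕ) : ℚ) = (((a*b*c - (a*b + a*c + b*c)) * n : ℕ) : ℚ) := by
      push_cast [Nat.cast_sub (le_of_lt hP)]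
      linarith [hq]
    exact_mod_cast h'
  have hAC : (a:ℚ) ≤ c := hAB.trans hBC
  have ha5 : a ≤ 5 := by
    have h' : (a:ℚ) ≤ 5 := by
      nlinarith [hca, mul_pos (mul_pos hA hB) hC,
        mul_nonneg (mul_nonneg hA.le hB.le) (sub_nonneg.2 hAC),
        mul_nonneg (mul_nonneg hA.le hC.le) (sub_nonneg.2 hAB)]
    exact_mod_cast h'
  have hb8 : b ≤ 8 := by
    have h' : (b:ℚ) ≤ 8 := by
      nlinarith [hcbq, mul_pos hA (mul_pos hB hC),
        mul_nonneg (mul_nonneg hA.le hB.le) (sub_nonneg.2 hBC),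
        mul_nonneg (sub_nonneg.2 hA2) (mul_nonneg (mul_nonneg hB.le hB.le) hC.le)]
    exact_mod_cast h'
  have h6 : a + b + 1 ≤ a*b := by
    by_contra h
    push_neg at h
    have h' : a*b*c ≤ (a+b)*c := Nat.mul_le_mul_right c (by omega)
    nlinarith [hP, h']
  have h6Q : (a:ℚ) + b + 1 ≤ (a:ℚ)*b := by exact_mod_cast h6
  have hc3ab : c ≤ 3*a*b := by
    have h' : (c:ℚ) ≤ 3*((a:ℚ)*b) := by
      nlinarith [hccq, hC, mul_pos hA hB,
        mul_nonneg (mul_nonneg hC.le hC.le) (by linarith : (0:ℚ) ≤ (a:ℚ)*b - a - b - 1)]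
    have h'' : ((c:ℕ):ℚ) ≤ ((3*a*b : ℕ) : ℚ) := by push_cast; linarith [h']
    exact Nat.cast_le.mp h''
  exact ⟨hP, hdvd, hcb, ha2, hab, hbc, ha5, hb8, hc3ab⟩

set_option synthInstance.maxHeartbeats 1000000 in
set_option synthInstance.maxSize 5000 in
set_option maxHeartbeats 2000000 in
lemma enum : ∀ a < 6, ∀ b < 9, ∀ c < 121,
    (2 ≤ a ∧ a ≤ b ∧ b ≤ c ∧ c ≤ 3*a*b ∧
     a*b+a*c+b*c < a*b*c ∧
     (a*b*c - (a*b+a*c+b*c)) ∣ 2*(a*b*c) ∧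
     c*(a*b*c-(a*b+a*c+b*c)) ≤ 2*(a*b*c)) →
    (a,b,c) ∈ [((2:ℕ),(3:ℕ),(7:ℕ)), (2,3,8), (2,4,5), (2,3,9), (2,3,10), (2,3,12),
        (2,4,6), (3,3,4), (2,3,14), (2,3,15), (2,5,5), (2,3,18), (2,4,8),
        (2,5,6), (3,3,5), (2,4,12), (2,6,6), (3,3,6), (3,4,4), (2,5,10),
        (2,6,9), (3,3,9), (2,8,8), (3,4,6), (4,4,4), (3,6,6), (4,4,6),
        (5,5,5)] := by
  decide

theorem stmt_1 (m₁ m₂ m₃ : ℕ) :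
    NcondL [m₁, m₂, m₃] ↔
      (m₁, m₂, m₃) ∈ ({(2,3,7), (2,3,8), (2,4,5), (2,3,9), (2,3,10), (2,3,12),
        (2,4,6), (3,3,4), (2,3,14), (2,3,15), (2,5,5), (2,3,18), (2,4,8),
        (2,5,6), (3,3,5), (2,4,12), (2,6,6), (3,3,6), (3,4,4), (2,5,10),
        (2,6,9), (3,3,9), (2,8,8), (3,4,6), (4,4,4), (3,6,6), (4,4,6),
        (5,5,5)} : Set (ℕ × ℕ × ℕ)) := by
  constructor
  · rintro ⟨h1, h2, h3, h4, h5⟩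
    obtain ⟨hP, hdvd, hcb, ha2, hab, hbc, ha5, hb8, hc3⟩ := fwd m₁ m₂ m₃ h1 h2 h3 h4 h5
    have h120 : 3*m₁*m₂ ≤ 120 := Nat.mul_le_mul (show 3*m₁ ≤ 15 by omega) hb8
    have hmem := enum m₁ (by omega) m₂ (by omega) m₃ (by omega)
      ⟨ha2, hab, hbc, hc3, hP, hdvd, hcb⟩
    simp only [List.mem_cons, List.not_mem_nil, or_false] at hmem
    simp only [Set.mem_insert_iff, Set.mem_singleton_iff]
    exact hmem
  · intro h
    simp only [Set.mem_insert_iff, Set.mem_singleton_iff, Prod.mk.injEq] at h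
    obtain (⟨rfl,rfl,rfl⟩|⟨rfl,rfl,rfl⟩|⟨rfl,rfl,rfl⟩|⟨rfl,rfl,rfl⟩|⟨rfl,rfl,rfl⟩|⟨rfl,rfl,rfl⟩|⟨rfl,rfl,rfl⟩|⟨rfl,rfl,rfl⟩|⟨rfl,rfl,rfl⟩|⟨rfl,rfl,rfl⟩|⟨rfl,rfl,rfl⟩|⟨rfl,rfl,rfl⟩|⟨rfl,rfl,rfl⟩|⟨rfl,rfl,rfl⟩|⟨rfl,rfl,rfl⟩|⟨rfl,rfl,rfl⟩|⟨rfl,rfl,rfl⟩|⟨rfl,rfl,rfl⟩|⟨rfl,rfl,rfl⟩|⟨rfl,rfl,rfl⟩|⟨rfl,rfl,rfl⟩|⟨rfl,rfl,rfl⟩|⟨rfl,rfl,rfl⟩|⟨rfl,rfl,rfl⟩|⟨rfl,rfl,rfl⟩|⟨rfl,rfl,rfl⟩|⟨rfl,rfl,rfl⟩|⟨rfl,rfl,rfl⟩) := h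
    · exact ncond 2 3 7 84 (by norm_num) (by norm_num) (by norm_num) (by norm_num) (by norm_num [thetaL]) (by norm_num)
    · exact ncond 2 3 8 48 (by norm_num) (by norm_num) (by norm_num) (by norm_num) (by norm_num [thetaL]) (by norm_num)
    · exact ncond 2 4 5 40 (by norm_num) (by norm_num) (by norm_num) (by norm_num) (by norm_num [thetaL]) (by norm_num)
    · exact ncond 2 3 9 36 (by norm_num) (by norm_num) (by norm_num) (by norm_num) (by norm_num [thetaL]) (by norm_num)
    · exact ncond 2 3 10 30 (by norm_num) (by norm_num) (by norm_num) (by norm_num) (by norm_num [thetaL]) (by norm_num)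
    · exact ncond 2 3 12 24 (by norm_num) (by norm_num) (by norm_num) (by norm_num) (by norm_num [thetaL]) (by norm_num)
    · exact ncond 2 4 6 24 (by norm_num) (by norm_num) (by norm_num) (by norm_num) (by norm_num [thetaL]) (by norm_num)
    · exact ncond 3 3 4 24 (by norm_num) (by norm_num) (by norm_num) (by norm_num) (by norm_num [thetaL]) (by norm_num)
    · exact ncond 2 3 14 21 (by norm_num) (by norm_num) (by norm_num) (by norm_num) (by norm_num [thetaL]) (by norm_num)
    · exact ncond 2 3 15 20 (by norm_num) (by norm_num) (by norm_num) (by norm_num) (by norm_num [thetaL]) (by norm_num)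
    · exact ncond 2 5 5 20 (by norm_num) (by norm_num) (by norm_num) (by norm_num) (by norm_num [thetaL]) (by norm_num)
    · exact ncond 2 3 18 18 (by norm_num) (by norm_num) (by norm_num) (by norm_num) (by norm_num [thetaL]) (by norm_num)
    · exact ncond 2 4 8 16 (by norm_num) (by norm_num) (by norm_num) (by norm_num) (by norm_num [thetaL]) (by norm_num)
    · exact ncond 2 5 6 15 (by norm_num) (by norm_num) (by norm_num) (by norm_num) (by norm_num [thetaL]) (by norm_num)
    · exact ncond 3 3 5 15 (by norm_num) (by norm_num) (by norm_num) (by norm_num) (by norm_num [thetaL]) (by norm_num)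
    · exact ncond 2 4 12 12 (by norm_num) (by norm_num) (by norm_num) (by norm_num) (by norm_num [thetaL]) (by norm_num)
    · exact ncond 2 6 6 12 (by norm_num) (by norm_num) (by norm_num) (by norm_num) (by norm_num [thetaL]) (by norm_num)
    · exact ncond 3 3 6 12 (by norm_num) (by norm_num) (by norm_num) (by norm_num) (by norm_num [thetaL]) (by norm_num)
    · exact ncond 3 4 4 12 (by norm_num) (by norm_num) (by norm_num) (by norm_num) (by norm_num [thetaL]) (by norm_num)
    · exact ncond 2 5 10 10 (by norm_num) (by norm_num) (by norm_num) (by norm_num) (by norm_num [thetaL]) (by norm_num)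
    · exact ncond 2 6 9 9 (by norm_num) (by norm_num) (by norm_num) (by norm_num) (by norm_num [thetaL]) (by norm_num)
    · exact ncond 3 3 9 9 (by norm_num) (by norm_num) (by norm_num) (by norm_num) (by norm_num [thetaL]) (by norm_num)
    · exact ncond 2 8 8 8 (by norm_num) (by norm_num) (by norm_num) (by norm_num) (by norm_num [thetaL]) (by norm_num)
    · exact ncond 3 4 6 8 (by norm_num) (by norm_num) (by norm_num) (by norm_num) (by norm_num [thetaL]) (by norm_num)
    · exact ncond 4 4 4 8 (by norm_num) (by norm_num) (by norm_num) (by norm_num) (by norm_num [thetaL]) (by norm_num)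
    · exact ncond 3 6 6 6 (by norm_num) (by norm_num) (by norm_num) (by norm_num) (by norm_num [thetaL]) (by norm_num)
    · exact ncond 4 4 6 6 (by norm_num) (by norm_num) (by norm_num) (by norm_num) (by norm_num [thetaL]) (by norm_num)
    · exact ncond 5 5 5 5 (by norm_num) (by norm_num) (by norm_num) (by norm_num) (by norm_num [thetaL]) (by norm_num)
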